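/- arXiv:1612.02726 — 4 statements merged into one kernel-verified Lean document; each statement's English description precedes it below -/
import Mathlib

section
/- Let q₀ > 0 and θ₊, θ₁ ∈ ℝ with θ₊ + θ₁ ≠ 2πn for every integer n. Set θ* := (θ₊ + θ₁)/2 and define q : ℝ × ℝ → ℂ by q(x,t) := q₀·exp(i(2q₀²t + θ₊))·cosh(q₀x − iθ*)/sinh(q₀x − iθ*). Then sinh(q₀x − iθ*) ≠ 0 for all x ∈ ℝ, and q satisfies the nonlocal NLS equation with σ = −1: for all x, t ∈ ℝ, i·∂q/∂t(x,t) = ∂²q/∂x²(x,t) + 2·q(x,t)²·conj(q(−x,t)). -/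
open Complex

theorem stmt11 (q₀ θp θ₁ : ℝ) (hq₀ : 0 < q₀)
    (hθ : ∀ n : ℤ, θp + θ₁ ≠ 2 * Real.pi * n)
    (θs : ℝ) (hθs : θs = (θp + θ₁) / 2)
    (q : ℝ → ℝ → ℂ)
    (hq : ∀ x t : ℝ, q x t = (q₀ : ℂ) * Complex.exp (Complex.I * (2 * (q₀ : ℂ) ^ 2 * (t : ℂ) + (θp : ℂ))) *
        Complex.cosh ((q₀ : ℂ) * (x : ℂ) - Complex.I * (θs : ℂ)) /
        Complex.sinh ((q₀ : ℂ) * (x : ℂ) - Complex.I * (θs : ℂ))) :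
    (∀ x : ℝ, Complex.sinh ((q₀ : ℂ) * (x : ℂ) - Complex.I * (θs : ℂ)) ≠ 0) ∧
    ∀ x t : ℝ, Complex.I * deriv (fun s : ℝ => q x s) t =
      deriv (deriv (fun y : ℝ => q y t)) x + 2 * (q x t) ^ 2 * starRingEnd ℂ (q (-x) t) := by
  have hsinh : ∀ x : ℝ, Complex.sinh ((q₀ : ℂ) * (x : ℂ) - Complex.I * (θs : ℂ)) ≠ 0 := by
    intro x hx
    have h1 : Complex.sin (((q₀ : ℂ) * (x : ℂ) - Complex.I * (θs : ℂ)) * Complex.I) = 0 := by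
      rw [Complex.sin_mul_I, hx, zero_mul]
    rw [Complex.sin_eq_zero_iff] at h1
    obtain ⟨k, hk⟩ := h1
    have hre := congrArg Complex.re hk
    have him := congrArg Complex.im hk
    simp [Complex.add_im, Complex.mul_im, Complex.mul_re] at hre him
    have hθk : θs = k * Real.pi := by nlinarith [hre]
    exact hθ k (by rw [hθs] at hθk; push_cast at hθk ⊢; linarith)
  refine ⟨hsinh, ?_⟩
  intro x t
  have hcd : ∀ y : ℝ, HasDerivAt (fun y : ℝ => ((q₀ : ℂ) * (y : ℂ) - Complex.I * (θs : ℂ))) (q₀ : ℂ) y := by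
    intro y
    have h1 : HasDerivAt (fun y : ℝ => (y : ℂ)) 1 y := Complex.ofRealCLM.hasDerivAt
    simpa using ((h1.const_mul (q₀ : ℂ)).sub_const (Complex.I * (θs : ℂ)))
  have hEd : ∀ s : ℝ, HasDerivAt (fun s : ℝ => Complex.exp (Complex.I * (2 * (q₀ : ℂ) ^ 2 * (s : ℂ) + (θp : ℂ))))
      (Complex.I * (2 * (q₀ : ℂ) ^ 2) * Complex.exp (Complex.I * (2 * (q₀ : ℂ) ^ 2 * (s : ℂ) + (θp : ℂ)))) s := by
    intro s
    have h1 : HasDerivAt (fun s : ℝ => (s : ℂ)) 1 s := Complex.ofRealCLM.hasDerivAt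
    have h2 : HasDerivAt (fun s : ℝ => Complex.I * (2 * (q₀ : ℂ) ^ 2 * (s : ℂ) + (θp : ℂ)))
        (Complex.I * (2 * (q₀ : ℂ) ^ 2)) s := by
      simpa using (((h1.const_mul (2 * (q₀ : ℂ) ^ 2)).add_const ((θp : ℂ))).const_mul Complex.I)
    have h3 := h2.cexp
    simpa [mul_comm] using h3
  -- time derivative
  have hqt : deriv (fun s : ℝ => q x s) t
      = (q₀ : ℂ) * (Complex.I * (2 * (q₀ : ℂ) ^ 2) * Complex.exp (Complex.I * (2 * (q₀ : ℂ) ^ 2 * (t : ℂ) + (θp : ℂ)))) * Complex.cosh ((q₀ : ℂ) * (x : ℂ) - Complex.I * (θs : ℂ)) / Complex.sinh ((q₀ : ℂ) * (x : ℂ) - Complex.I * (θs : ℂ)) := by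
    have hfe : (fun s : ℝ => q x s) = fun s : ℝ => (q₀ : ℂ) * Complex.exp (Complex.I * (2 * (q₀ : ℂ) ^ 2 * (s : ℂ) + (θp : ℂ))) * Complex.cosh ((q₀ : ℂ) * (x : ℂ) - Complex.I * (θs : ℂ)) / Complex.sinh ((q₀ : ℂ) * (x : ℂ) - Complex.I * (θs : ℂ)) :=
      funext fun s => hq x s
    rw [hfe]
    exact ((((hEd t).const_mul (q₀ : ℂ)).mul_const (Complex.cosh ((q₀ : ℂ) * (x : ℂ) - Complex.I * (θs : ℂ)))).div_const (Complex.sinh ((q₀ : ℂ) * (x : ℂ) - Complex.I * (θs : ℂ)))).deriv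
  -- space derivatives
  have hch : ∀ y : ℝ, HasDerivAt (fun y : ℝ => Complex.cosh ((q₀ : ℂ) * (y : ℂ) - Complex.I * (θs : ℂ)))
      (Complex.sinh ((q₀ : ℂ) * (y : ℂ) - Complex.I * (θs : ℂ)) * (q₀ : ℂ)) y := by
    intro y
    simpa [Function.comp_def] using (Complex.hasDerivAt_cosh _).comp y (hcd y)
  have hsh : ∀ y : ℝ, HasDerivAt (fun y : ℝ => Complex.sinh ((q₀ : ℂ) * (y : ℂ) - Complex.I * (θs : ℂ)))
      (Complex.cosh ((q₀ : ℂ) * (y : ℂ) - Complex.I * (θs : ℂ)) * (q₀ : ℂ)) y := by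
    intro y
    simpa [Function.comp_def] using (Complex.hasDerivAt_sinh _).comp y (hcd y)
  have hfd : ∀ y : ℝ, HasDerivAt (fun y : ℝ => (q₀ : ℂ) * Complex.exp (Complex.I * (2 * (q₀ : ℂ) ^ 2 * (t : ℂ) + (θp : ℂ))) * Complex.cosh ((q₀ : ℂ) * (y : ℂ) - Complex.I * (θs : ℂ)) / Complex.sinh ((q₀ : ℂ) * (y : ℂ) - Complex.I * (θs : ℂ)))
      (-((q₀ : ℂ) * Complex.exp (Complex.I * (2 * (q₀ : ℂ) ^ 2 * (t : ℂ) + (θp : ℂ))) * (q₀ : ℂ)) / (Complex.sinh ((q₀ : ℂ) * (y : ℂ) - Complex.I * (θs : ℂ))) ^ 2) y := by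
    intro y
    have h := (((hch y).const_mul ((q₀ : ℂ) * Complex.exp (Complex.I * (2 * (q₀ : ℂ) ^ 2 * (t : ℂ) + (θp : ℂ))))).div (hsh y) (hsinh y))
    have hc1 := Complex.cosh_sq_sub_sinh_sq ((q₀ : ℂ) * (y : ℂ) - Complex.I * (θs : ℂ))
    have hnum : (q₀ : ℂ) * Complex.exp (Complex.I * (2 * (q₀ : ℂ) ^ 2 * (t : ℂ) + (θp : ℂ))) * (Complex.sinh ((q₀ : ℂ) * (y : ℂ) - Complex.I * (θs : ℂ)) * (q₀:ℂ)) * Complex.sinh ((q₀ : ℂ) * (y : ℂ) - Complex.I * (θs : ℂ))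
        - (q₀ : ℂ) * Complex.exp (Complex.I * (2 * (q₀ : ℂ) ^ 2 * (t : ℂ) + (θp : ℂ))) * Complex.cosh ((q₀ : ℂ) * (y : ℂ) - Complex.I * (θs : ℂ)) * (Complex.cosh ((q₀ : ℂ) * (y : ℂ) - Complex.I * (θs : ℂ)) * (q₀:ℂ))
        = -((q₀ : ℂ) * Complex.exp (Complex.I * (2 * (q₀ : ℂ) ^ 2 * (t : ℂ) + (θp : ℂ))) * (q₀:ℂ)) := by
      linear_combination (-((q₀ : ℂ) * Complex.exp (Complex.I * (2 * (q₀ : ℂ) ^ 2 * (t : ℂ) + (θp : ℂ))) * (q₀:ℂ))) * hc1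
    rw [hnum] at h
    exact h
  have hd1 : deriv (fun y : ℝ => q y t)
      = fun y : ℝ => -((q₀ : ℂ) * Complex.exp (Complex.I * (2 * (q₀ : ℂ) ^ 2 * (t : ℂ) + (θp : ℂ))) * (q₀ : ℂ)) / (Complex.sinh ((q₀ : ℂ) * (y : ℂ) - Complex.I * (θs : ℂ))) ^ 2 := by
    have hfe : (fun y : ℝ => q y t) = fun y : ℝ => (q₀ : ℂ) * Complex.exp (Complex.I * (2 * (q₀ : ℂ) ^ 2 * (t : ℂ) + (θp : ℂ))) * Complex.cosh ((q₀ : ℂ) * (y : ℂ) - Complex.I * (θs : ℂ)) / Complex.sinh ((q₀ : ℂ) * (y : ℂ) - Complex.I * (θs : ℂ)) :=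
      funext fun y => hq y t
    rw [hfe]
    exact funext fun y => (hfd y).deriv
  have hd2 : deriv (deriv (fun y : ℝ => q y t)) x
      = 2 * ((q₀ : ℂ) * Complex.exp (Complex.I * (2 * (q₀ : ℂ) ^ 2 * (t : ℂ) + (θp : ℂ)))) * (q₀ : ℂ) ^ 2 * Complex.cosh ((q₀ : ℂ) * (x : ℂ) - Complex.I * (θs : ℂ)) / (Complex.sinh ((q₀ : ℂ) * (x : ℂ) - Complex.I * (θs : ℂ))) ^ 3 := by
    rw [hd1]
    have hv : HasDerivAt (fun y : ℝ => (Complex.sinh ((q₀ : ℂ) * (y : ℂ) - Complex.I * (θs : ℂ))) ^ 2)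
        (2 * Complex.sinh ((q₀ : ℂ) * (x : ℂ) - Complex.I * (θs : ℂ)) * (Complex.cosh ((q₀ : ℂ) * (x : ℂ) - Complex.I * (θs : ℂ)) * (q₀ : ℂ))) x := by
      have h := (hsh x).mul (hsh x)
      simp only [← pow_two] at h
      exact h.congr_deriv (by ring)
    have h := (hasDerivAt_const x (-((q₀ : ℂ) * Complex.exp (Complex.I * (2 * (q₀ : ℂ) ^ 2 * (t : ℂ) + (θp : ℂ))) * (q₀ : ℂ)))).div hv (pow_ne_zero 2 (hsinh x))
    have h' : HasDerivAt (fun y : ℝ => -((q₀ : ℂ) * Complex.exp (Complex.I * (2 * (q₀ : ℂ) ^ 2 * (t : ℂ) + (θp : ℂ))) * (q₀ : ℂ)) / (Complex.sinh ((q₀ : ℂ) * (y : ℂ) - Complex.I * (θs : ℂ))) ^ 2) _ x := h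
    rw [h'.deriv]
    have h2 := hsinh x
    field_simp
    ring
  -- conjugate term
  have hconj : starRingEnd ℂ (q (-x) t)
      = -((q₀ : ℂ) * Complex.exp (-(Complex.I * (2 * (q₀ : ℂ) ^ 2 * ((t : ℝ) : ℂ) + (θp : ℂ)))) * Complex.cosh ((q₀ : ℂ) * (x : ℂ) - Complex.I * (θs : ℂ)) / Complex.sinh ((q₀ : ℂ) * (x : ℂ) - Complex.I * (θs : ℂ))) := by
    rw [hq]
    have harg : (starRingEnd ℂ) ((q₀ : ℂ) * ((-x : ℝ) : ℂ) - Complex.I * (θs : ℂ)) = -((q₀ : ℂ) * (x : ℂ) - Complex.I * (θs : ℂ)) := by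
      simp [map_sub, map_mul, Complex.conj_ofReal, Complex.conj_I]
      push_cast
      ring
    have hargE : (starRingEnd ℂ) (Complex.I * (2 * (q₀ : ℂ) ^ 2 * (t : ℂ) + (θp : ℂ)))
        = -(Complex.I * (2 * (q₀ : ℂ) ^ 2 * (t : ℂ) + (θp : ℂ))) := by
      simp [map_add, map_mul, map_pow, map_ofNat, Complex.conj_ofReal, Complex.conj_I]
    rw [map_div₀, map_mul, map_mul, ← Complex.cosh_conj, ← Complex.sinh_conj, ← Complex.exp_conj,
      harg, hargE, Complex.cosh_neg, Complex.sinh_neg, Complex.conj_ofReal]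
    rw [div_neg]
  -- put it together
  rw [hqt, hd2, hconj, hq x t]
  have hEE : Complex.exp (Complex.I * (2 * (q₀ : ℂ) ^ 2 * (t : ℂ) + (θp : ℂ))) * Complex.exp (-(Complex.I * (2 * (q₀ : ℂ) ^ 2 * ((t : ℝ) : ℂ) + (θp : ℂ)))) = 1 := by
    rw [← Complex.exp_add]
    simp
  have hc1 := Complex.cosh_sq_sub_sinh_sq ((q₀ : ℂ) * (x : ℂ) - Complex.I * (θs : ℂ))
  have h2 := hsinh x
  have hI : (Complex.I : ℂ) ^ 2 = -1 := Complex.I_sq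
  set E := Complex.exp (Complex.I * (2 * (q₀ : ℂ) ^ 2 * (t : ℂ) + (θp : ℂ)))
  set C := Complex.cosh ((q₀ : ℂ) * (x : ℂ) - Complex.I * (θs : ℂ))
  set S := Complex.sinh ((q₀ : ℂ) * (x : ℂ) - Complex.I * (θs : ℂ))
  have hS : S * S⁻¹ = 1 := mul_inv_cancel₀ h2
  linear_combination (2 * (q₀:ℂ)^3 * E * C * S⁻¹) * hI + (2 * (q₀:ℂ)^3 * E * C^3 * S⁻¹^3) * hEE + (2 * (q₀:ℂ)^3 * E * C * S⁻¹^3) * hc1 + (2 * (q₀:ℂ)^3 * E * C * S⁻¹ * (1 + S * S⁻¹)) * hS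
end

section
/- Define q : ℝ × ℝ → ℂ by q(x,t) := i·e^{8it}·N(x,t)/D(x,t), where N(x,t) := (−√3 + 3i)·cosh(4√3·t) + 2i·cosh(2√3·x) + (−3√3 + i)·sinh(4√3·t) − 2·sinh(2√3·x) and D(x,t) := 3·cosh(4√3·t) − cosh(2√3·x) + sinh(4√3·t) − i·sinh(2√3·x). Then D(x,t) ≠ 0 for all x, t ∈ ℝ, and q satisfies the nonlocal NLS equation with σ = +1: for all x, t ∈ ℝ, i·∂q/∂t(x,t) = ∂²q/∂x²(x,t) − 2·q(x,t)²·conj(q(−x,t)). -/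
open Complex

lemma hdc (c t : ℝ) : HasDerivAt (fun s : ℝ => ((Real.cosh (c*s) : ℝ) : ℂ)) ((c:ℂ) * (Real.sinh (c*t):ℂ)) t := by
  have h := (((hasDerivAt_id t).const_mul c).cosh).ofReal_comp
  refine h.congr_deriv ?_
  simp only [id_eq]; push_cast; ring

lemma hds (c t : ℝ) : HasDerivAt (fun s : ℝ => ((Real.sinh (c*s) : ℝ) : ℂ)) ((c:ℂ) * (Real.cosh (c*t):ℂ)) t := by
  have h := (((hasDerivAt_id t).const_mul c).sinh).ofReal_comp
  refine h.congr_deriv ?_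
  simp only [id_eq]; push_cast; ring

lemma hde (t : ℝ) : HasDerivAt (fun s : ℝ => Complex.exp (8*Complex.I*s)) (8*Complex.I*Complex.exp (8*Complex.I*t)) t := by
  have h := (((hasDerivAt_id (t:ℂ)).const_mul (8*Complex.I)).cexp).comp_ofReal
  refine h.congr_deriv ?_
  simp only [id_eq]; ring

noncomputable def cT (t : ℝ) : ℂ := ((Real.cosh (4*Real.sqrt 3*t) : ℝ) : ℂ)
noncomputable def sT (t : ℝ) : ℂ := ((Real.sinh (4*Real.sqrt 3*t) : ℝ) : ℂ)
noncomputable def cX (x : ℝ) : ℂ := ((Real.cosh (2*Real.sqrt 3*x) : ℝ) : ℂ)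
noncomputable def sX (x : ℝ) : ℂ := ((Real.sinh (2*Real.sqrt 3*x) : ℝ) : ℂ)
noncomputable def ee (t : ℝ) : ℂ := Complex.exp (8*Complex.I*t)
noncomputable def Nf (x t : ℝ) : ℂ :=
  (-(Real.sqrt 3:ℂ) + 3*Complex.I) * cT t + 2*Complex.I*cX x + (-3*(Real.sqrt 3:ℂ)+Complex.I)*sT t - 2*sX x
noncomputable def Df (x t : ℝ) : ℂ := 3*cT t - cX x + sT t - Complex.I*sX x
noncomputable def NtV (t : ℝ) : ℂ :=
  (4*(Real.sqrt 3:ℂ))*((-(Real.sqrt 3:ℂ)+3*Complex.I)*sT t + (-3*(Real.sqrt 3:ℂ)+Complex.I)*cT t)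
noncomputable def DtV (t : ℝ) : ℂ := (4*(Real.sqrt 3:ℂ))*(3*sT t + cT t)
noncomputable def NxV (x : ℝ) : ℂ := (2*(Real.sqrt 3:ℂ))*(2*Complex.I*sX x - 2*cX x)
noncomputable def DxV (x : ℝ) : ℂ := (2*(Real.sqrt 3:ℂ))*(-sX x - Complex.I*cX x)
noncomputable def NxxV (x : ℝ) : ℂ := (2*(Real.sqrt 3:ℂ))*((2*(Real.sqrt 3:ℂ))*(2*Complex.I*cX x - 2*sX x))
noncomputable def DxxV (x : ℝ) : ℂ := (2*(Real.sqrt 3:ℂ))*((2*(Real.sqrt 3:ℂ))*(-cX x - Complex.I*sX x))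

lemma hdcT (t : ℝ) : HasDerivAt cT ((4*(Real.sqrt 3:ℂ)) * sT t) t := by
  unfold cT sT
  have h := hdc (4*Real.sqrt 3) t
  convert h using 1 <;> push_cast <;> ring

lemma hdsT (t : ℝ) : HasDerivAt sT ((4*(Real.sqrt 3:ℂ)) * cT t) t := by
  unfold cT sT
  have h := hds (4*Real.sqrt 3) t
  convert h using 1 <;> push_cast <;> ring

lemma hdcX (x : ℝ) : HasDerivAt cX ((2*(Real.sqrt 3:ℂ)) * sX x) x := by
  unfold cX sX
  have h := hdc (2*Real.sqrt 3) x
  convert h using 1 <;> push_cast <;> ring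

lemma hdsX (x : ℝ) : HasDerivAt sX ((2*(Real.sqrt 3:ℂ)) * cX x) x := by
  unfold cX sX
  have h := hds (2*Real.sqrt 3) x
  convert h using 1 <;> push_cast <;> ring

lemma hdee (t : ℝ) : HasDerivAt ee (8*Complex.I*ee t) t := hde t

lemma hdNt (x t : ℝ) : HasDerivAt (fun s => Nf x s) (NtV t) t := by
  unfold Nf NtV
  have h := ((((hdcT t).const_mul (-(Real.sqrt 3:ℂ)+3*Complex.I)).add_const
      (2*Complex.I*cX x)).add ((hdsT t).const_mul (-3*(Real.sqrt 3:ℂ)+Complex.I))).sub_const (2*sX x)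
  refine h.congr_deriv ?_
  ring

lemma hdDt (x t : ℝ) : HasDerivAt (fun s => Df x s) (DtV t) t := by
  unfold Df DtV
  have h := ((((hdcT t).const_mul (3:ℂ)).sub_const (cX x)).add (hdsT t)).sub_const (Complex.I*sX x)
  refine h.congr_deriv ?_
  ring

lemma hdNx (x t : ℝ) : HasDerivAt (fun y => Nf y t) (NxV x) x := by
  unfold Nf NxV
  have h := (((hasDerivAt_const x ((-(Real.sqrt 3:ℂ)+3*Complex.I)*cT t)).add
      ((hdcX x).const_mul (2*Complex.I))).add_const ((-3*(Real.sqrt 3:ℂ)+Complex.I)*sT t)).sub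
      ((hdsX x).const_mul (2:ℂ))
  refine h.congr_deriv ?_
  ring

lemma hdDx (x t : ℝ) : HasDerivAt (fun y => Df y t) (DxV x) x := by
  unfold Df DxV
  have h := (((hasDerivAt_const x ((3:ℂ)*cT t)).sub (hdcX x)).add_const (sT t)).sub
      ((hdsX x).const_mul Complex.I)
  refine h.congr_deriv ?_
  ring

lemma hdNxV (x : ℝ) : HasDerivAt NxV (NxxV x) x := by
  unfold NxV NxxV
  have h := (((hdsX x).const_mul (2*Complex.I)).sub ((hdcX x).const_mul (2:ℂ))).const_mul
      (2*(Real.sqrt 3:ℂ))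
  refine h.congr_deriv ?_
  ring

lemma hdDxV (x : ℝ) : HasDerivAt DxV (DxxV x) x := by
  unfold DxV DxxV
  have h := (((hdsX x).neg.sub ((hdcX x).const_mul Complex.I)).const_mul (2*(Real.sqrt 3:ℂ)))
  refine h.congr_deriv ?_
  ring

lemma Dne (a b c d : ℝ) (h1 : a^2 = b^2+1) (h2 : c^2 = d^2+1) (ha : 1 ≤ a) (hc : 1 ≤ c) :
    (3*(a:ℂ) - (c:ℂ) + (b:ℂ) - Complex.I*(d:ℂ)) ≠ 0 := by
  intro h
  have him := congrArg Complex.im h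
  have hre := congrArg Complex.re h
  simp at him hre
  have hd0 : d = 0 := him
  have hc1 : c = 1 := by nlinarith
  nlinarith [sq_nonneg (8*a - 3)]

lemma DfNe (x t : ℝ) : Df x t ≠ 0 := by
  unfold Df cT sT cX sX
  exact Dne _ _ _ _ (by nlinarith [Real.cosh_sq_sub_sinh_sq (4*Real.sqrt 3*t)])
    (by nlinarith [Real.cosh_sq_sub_sinh_sq (2*Real.sqrt 3*x)])
    (Real.one_le_cosh _) (Real.one_le_cosh _)

lemma reduce (d p q n s : ℂ) (hd : d ≠ 0)
    (h : Complex.I * p * d = q - 2 * n^2 * s) :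
    Complex.I * (p / d^2) = q/d^3 - 2*(n/d)^2*(s/d) := by
  field_simp
  linear_combination h

theorem stmt12 (N D q : ℝ → ℝ → ℂ)
    (hN : ∀ x t : ℝ, N x t =
        (-(Real.sqrt 3 : ℂ) + 3 * Complex.I) * (Real.cosh (4 * Real.sqrt 3 * t) : ℂ)
        + 2 * Complex.I * (Real.cosh (2 * Real.sqrt 3 * x) : ℂ)
        + (-3 * (Real.sqrt 3 : ℂ) + Complex.I) * (Real.sinh (4 * Real.sqrt 3 * t) : ℂ)
        - 2 * (Real.sinh (2 * Real.sqrt 3 * x) : ℂ))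
    (hD : ∀ x t : ℝ, D x t =
        3 * (Real.cosh (4 * Real.sqrt 3 * t) : ℂ) - (Real.cosh (2 * Real.sqrt 3 * x) : ℂ)
        + (Real.sinh (4 * Real.sqrt 3 * t) : ℂ) - Complex.I * (Real.sinh (2 * Real.sqrt 3 * x) : ℂ))
    (hq : ∀ x t : ℝ, q x t = Complex.I * Complex.exp (8 * Complex.I * (t : ℂ)) * N x t / D x t) :
    (∀ x t : ℝ, D x t ≠ 0) ∧
    ∀ x t : ℝ, Complex.I * deriv (fun s : ℝ => q x s) t =
      deriv (deriv (fun y : ℝ => q y t)) x - 2 * (q x t) ^ 2 * starRingEnd ℂ (q (-x) t) := by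
  have hDf : ∀ x t : ℝ, D x t = Df x t := by
    intro x t; rw [hD]; unfold Df cT sT cX sX; ring
  have hNf : ∀ x t : ℝ, N x t = Nf x t := by
    intro x t; rw [hN]; unfold Nf cT sT cX sX; ring
  refine ⟨fun x t => by rw [hDf]; exact DfNe x t, ?_⟩
  intro x t
  have hQfunT : (fun s : ℝ => q x s) = fun s => Complex.I * ee s * Nf x s / Df x s := by
    funext s; rw [hq, hNf, hDf]; rfl
  have hQfunX : (fun y : ℝ => q y t) = fun y => Complex.I * ee t * Nf y t / Df y t := by
    funext y; rw [hq, hNf, hDf]; rfl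
  rw [hQfunT, hQfunX]
  -- t derivative
  have h1 : HasDerivAt (fun s => Complex.I * ee s * Nf x s / Df x s)
      ((Complex.I*ee t*(8*Complex.I*Nf x t + NtV t)*Df x t
        - Complex.I*ee t*Nf x t*DtV t)/Df x t^2) t := by
    have h := (((hdee t).const_mul Complex.I).mul (hdNt x t)).div (hdDt x t) (DfNe x t)
    refine h.congr_deriv ?_
    simp only [Pi.mul_apply]
    try ring
  rw [h1.deriv]
  -- first x derivative
  have h2 : ∀ y : ℝ, HasDerivAt (fun y => Complex.I * ee t * Nf y t / Df y t)
      ((Complex.I*ee t*NxV y*Df y t - Complex.I*ee t*Nf y t*DxV y)/Df y t^2) y := by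
    intro y
    have h := ((hdNx y t).const_mul (Complex.I*ee t)).div (hdDx y t) (DfNe y t)
    refine h.congr_deriv ?_
    try ring
  have hd2 : deriv (fun y => Complex.I * ee t * Nf y t / Df y t)
      = fun y => (Complex.I*ee t*NxV y*Df y t - Complex.I*ee t*Nf y t*DxV y)/Df y t^2 :=
    funext fun y => (h2 y).deriv
  rw [hd2]
  -- second x derivative
  have h3 : HasDerivAt
      (fun y => (Complex.I*ee t*NxV y*Df y t - Complex.I*ee t*Nf y t*DxV y)/Df y t^2)
      (Complex.I*ee t*((NxxV x*Df x t - Nf x t*DxxV x)*Df x t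
        - 2*DxV x*(NxV x*Df x t - Nf x t*DxV x))/Df x t^3) x := by
    have hnum : HasDerivAt
        (fun y => Complex.I*ee t*NxV y*Df y t - Complex.I*ee t*Nf y t*DxV y)
        ((Complex.I*ee t*NxxV x*Df x t + Complex.I*ee t*NxV x*DxV x)
          - (Complex.I*ee t*NxV x*DxV x + Complex.I*ee t*Nf x t*DxxV x)) x := by
      have h := (((hdNxV x).const_mul (Complex.I*ee t)).mul (hdDx x t)).sub
        (((hdNx x t).const_mul (Complex.I*ee t)).mul (hdDxV x))
      refine h.congr_deriv ?_
      try ring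
    have hden : HasDerivAt (fun y => Df y t^2) (DxV x*Df x t + Df x t*DxV x) x := by
      have h := (hdDx x t).mul (hdDx x t)
      simp only [← pow_two] at h
      exact h
    have h := hnum.div hden (pow_ne_zero 2 (DfNe x t))
    refine h.congr_deriv ?_
    have hne := DfNe x t
    field_simp
    ring
  rw [h3.deriv]
  -- conjugate term
  have hxc : Real.cosh (2*Real.sqrt 3*(-x)) = Real.cosh (2*Real.sqrt 3 * x) := by
    rw [mul_neg, Real.cosh_neg]
  have hxs : Real.sinh (2*Real.sqrt 3*(-x)) = -Real.sinh (2*Real.sqrt 3 * x) := by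
    rw [mul_neg, Real.sinh_neg]
  have hconj : starRingEnd ℂ (q (-x) t) = -Complex.I * Complex.exp (-(8*Complex.I*t)) *
      ((-(Real.sqrt 3:ℂ)-3*Complex.I)*cT t - 2*Complex.I*cX x
        + (-3*(Real.sqrt 3:ℂ)-Complex.I)*sT t + 2*sX x) / Df x t := by
    rw [hq, hN, hD, hxc, hxs]
    simp only [map_div₀, map_mul, map_add, map_sub, map_neg, Complex.conj_I,
      Complex.conj_ofReal, map_ofNat, Complex.ofReal_neg]
    rw [← Complex.exp_conj]
    simp only [map_mul, Complex.conj_I, Complex.conj_ofReal, map_ofNat]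
    unfold Df cT sT cX sX
    rw [show (8:ℂ)*(-Complex.I)*(t:ℂ) = -(8*Complex.I*(t:ℂ)) by ring]
    push_cast
    ring
  rw [hconj, hq, hNf, hDf]
  unfold Nf Df NtV DtV NxV DxV NxxV DxxV ee cT sT cX sX
  have hA : ((Real.sqrt 3 : ℝ):ℂ)^2 = 3 := by
    rw [← Complex.ofReal_pow, Real.sq_sqrt (by norm_num : (0:ℝ) ≤ 3)]; norm_num
  have hT : ((Real.cosh (4*Real.sqrt 3*t):ℝ):ℂ)^2 - ((Real.sinh (4*Real.sqrt 3*t):ℝ):ℂ)^2 = 1 := by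
    norm_cast; exact_mod_cast Real.cosh_sq_sub_sinh_sq _
  have hX : ((Real.cosh (2*Real.sqrt 3*x):ℝ):ℂ)^2 - ((Real.sinh (2*Real.sqrt 3*x):ℝ):ℂ)^2 = 1 := by
    norm_cast; exact_mod_cast Real.cosh_sq_sub_sinh_sq _
  have hEF : Complex.exp (8*Complex.I*(t:ℂ)) * Complex.exp (-(8*Complex.I*(t:ℂ))) = 1 := by
    rw [← Complex.exp_add]; simp
  have hE : Complex.exp (8*Complex.I*(t:ℂ)) ≠ 0 := Complex.exp_ne_zero _
  have hF : Complex.exp (-(8*Complex.I*(t:ℂ))) ≠ 0 := Complex.exp_ne_zero _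
  have hDn := DfNe x t
  unfold Df cT sT cX sX at hDn
  have hI : Complex.I^2 = -1 := Complex.I_sq
  set A := ((Real.sqrt 3 : ℝ):ℂ) with hAdef
  set ct := ((Real.cosh (4*Real.sqrt 3*t):ℝ):ℂ) with hct
  set st := ((Real.sinh (4*Real.sqrt 3*t):ℝ):ℂ) with hst
  set cx := ((Real.cosh (2*Real.sqrt 3*x):ℝ):ℂ) with hcx
  set sx := ((Real.sinh (2*Real.sqrt 3*x):ℝ):ℂ) with hsx
  set E := Complex.exp (8*Complex.I*(t:ℂ)) with hEdef
  set F := Complex.exp (-(8*Complex.I*(t:ℂ))) with hFdef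
  clear_value A ct st cx sx E F
  refine reduce _ _ _ _ _ hDn ?_
  linear_combination ((48)*cx*sx^2*E + (-48)*cx*sx^2*E^2*F + (-16)*cx^3*E + (16)*cx^3*E^2*F + (-24)*st*sx^2*E + (-24)*st*sx^2*E^2*F + (24)*st*cx^2*E + (24)*st*cx^2*E^2*F + (12)*st^2*cx*E^2*F + (-8)*st^3*E + (2)*st^3*E^2*F + (-72)*ct*sx^2*E + (-72)*ct*sx^2*E^2*F + (72)*ct*cx^2*E + (72)*ct*cx^2*E^2*F + (72)*ct*st*cx*E^2*F + (-72)*ct*st^2*E + (18)*ct*st^2*E^2*F + (108)*ct^2*cx*E^2*F + (-216)*ct^2*st*E + (54)*ct^2*st*E^2*F + (-216)*ct^3*E + (54)*ct^3*E^2*F + (-24)*A*st*cx*sx*E + (-48)*A*st*cx*sx*E^2*F + (-12)*A*st^2*sx*E + (-24)*A*st^2*sx*E^2*F + (-8)*A*ct*cx*sx*E + (-16)*A*ct*cx*sx*E^2*F + (-40)*A*ct*st*sx*E + (-80)*A*ct*st*sx*E^2*F + (-12)*A*ct^2*sx*E + (-24)*A*ct^2*sx*E^2*F + (-32)*A^2*st*sx^2*E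 + (32)*A^2*st*cx^2*E + (-40)*A^2*st^2*cx*E + (36)*A^2*st^2*cx*E^2*F + (32)*A^2*st^3*E + (18)*A^2*st^3*E^2*F + (-96)*A^2*ct*sx^2*E + (96)*A^2*ct*cx^2*E + (-48)*A^2*ct*st*cx*E + (24)*A^2*ct*st*cx*E^2*F + (96)*A^2*ct*st^2*E + (66)*A^2*ct*st^2*E^2*F + (-40)*A^2*ct^2*cx*E + (4)*A^2*ct^2*cx*E^2*F + (-32)*A^2*ct^2*st*E + (38)*A^2*ct^2*st*E^2*F + (-96)*A^2*ct^3*E + (6)*A^2*ct^3*E^2*F + (24)*A^3*st*cx*sx*E + (12)*A^3*st^2*sx*E + (8)*A^3*ct*cx*sx*E + (40)*A^3*ct*st*sx*E + (12)*A^3*ct^2*sx*E + (16)*Complex.I*sx^3*E + (-16)*Complex.I*sx^3*E^2*F + (-48)*Complex.I*cx^2*sx*E + (48)*Complex.I*cx^2*sx*E^2*F + (48)*Complex.I*st*cx*sx*E + (48)*Complex.I*st*cx*sx*E^2*F + (12)*Complex.I*st^2*sx*E^2*F + (144)*Complex.I*ct*cx*sx*E + (144)*Complex.I*ct*cx*sx*E^2*F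 + (72)*Complex.I*ct*st*sx*E^2*F + (108)*Complex.I*ct^2*sx*E^2*F + (-12)*Complex.I*A*st*sx^2*E + (-24)*Complex.I*A*st*sx^2*E^2*F + (12)*Complex.I*A*st*cx^2*E + (24)*Complex.I*A*st*cx^2*E^2*F + (12)*Complex.I*A*st^2*cx*E + (24)*Complex.I*A*st^2*cx*E^2*F + (-24)*Complex.I*A*st^3*E + (6)*Complex.I*A*st^3*E^2*F + (-4)*Complex.I*A*ct*sx^2*E + (-8)*Complex.I*A*ct*sx^2*E^2*F + (4)*Complex.I*A*ct*cx^2*E + (8)*Complex.I*A*ct*cx^2*E^2*F + (40)*Complex.I*A*ct*st*cx*E + (80)*Complex.I*A*ct*st*cx*E^2*F + (-152)*Complex.I*A*ct*st^2*E + (38)*Complex.I*A*ct*st^2*E^2*F + (12)*Complex.I*A*ct^2*cx*E + (24)*Complex.I*A*ct^2*cx*E^2*F + (-264)*Complex.I*A*ct^2*st*E + (66)*Complex.I*A*ct^2*st*E^2*F + (-72)*Complex.I*A*ct^3*E + (18)*Complex.I*A*ct^3*E^2*F + (16)*Complex.I*A^2*sx^3*E + (-16)*Complex.I*A^2*cx^2*sx*E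 + (-24)*Complex.I*A^2*st*cx*sx*E + (-32)*Complex.I*A^2*st^2*sx*E + (36)*Complex.I*A^2*st^2*sx*E^2*F + (-72)*Complex.I*A^2*ct*cx*sx*E + (24)*Complex.I*A^2*ct*st*sx*E^2*F + (32)*Complex.I*A^2*ct^2*sx*E + (4)*Complex.I*A^2*ct^2*sx*E^2*F + (-12)*Complex.I*A^3*st*sx^2*E + (24)*Complex.I*A^3*st*cx^2*E + (54)*Complex.I*A^3*st^3*E^2*F + (-4)*Complex.I*A^3*ct*sx^2*E + (8)*Complex.I*A^3*ct*cx^2*E + (54)*Complex.I*A^3*ct*st^2*E^2*F + (18)*Complex.I*A^3*ct^2*st*E^2*F + (2)*Complex.I*A^3*ct^3*E^2*F + (-48)*Complex.I^2*cx*sx^2*E + (48)*Complex.I^2*cx*sx^2*E^2*F + (16)*Complex.I^2*cx^3*E + (-16)*Complex.I^2*cx^3*E^2*F + (24)*Complex.I^2*st*sx^2*E + (24)*Complex.I^2*st*sx^2*E^2*F + (-24)*Complex.I^2*st*cx^2*E + (-24)*Complex.I^2*st*cx^2*E^2*F + (-12)*Complex.I^2*st^2*cx*E^2*F + (8)*Complex.I^2*st^3*E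 + (-2)*Complex.I^2*st^3*E^2*F + (72)*Complex.I^2*ct*sx^2*E + (72)*Complex.I^2*ct*sx^2*E^2*F + (-72)*Complex.I^2*ct*cx^2*E + (-72)*Complex.I^2*ct*cx^2*E^2*F + (-72)*Complex.I^2*ct*st*cx*E^2*F + (72)*Complex.I^2*ct*st^2*E + (-18)*Complex.I^2*ct*st^2*E^2*F + (-108)*Complex.I^2*ct^2*cx*E^2*F + (216)*Complex.I^2*ct^2*st*E + (-54)*Complex.I^2*ct^2*st*E^2*F + (216)*Complex.I^2*ct^3*E + (-54)*Complex.I^2*ct^3*E^2*F + (48)*Complex.I^2*A*st*cx*sx*E^2*F + (36)*Complex.I^2*A*st^2*sx*E + (24)*Complex.I^2*A*st^2*sx*E^2*F + (16)*Complex.I^2*A*ct*cx*sx*E^2*F + (120)*Complex.I^2*A*ct*st*sx*E + (80)*Complex.I^2*A*ct*st*sx*E^2*F + (36)*Complex.I^2*A*ct^2*sx*E + (24)*Complex.I^2*A*ct^2*sx*E^2*F + (16)*Complex.I^2*A^2*cx*sx^2*E + (-16)*Complex.I^2*A^2*cx^3*E + (-8)*Complex.I^2*A^2*st*cx^2*E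 + (-36)*Complex.I^2*A^2*st^2*cx*E^2*F + (-18)*Complex.I^2*A^2*st^3*E^2*F + (-24)*Complex.I^2*A^2*ct*cx^2*E + (-24)*Complex.I^2*A^2*ct*st*cx*E^2*F + (-66)*Complex.I^2*A^2*ct*st^2*E^2*F + (-4)*Complex.I^2*A^2*ct^2*cx*E^2*F + (-38)*Complex.I^2*A^2*ct^2*st*E^2*F + (-6)*Complex.I^2*A^2*ct^3*E^2*F + (-16)*Complex.I^3*sx^3*E + (32)*Complex.I^3*cx^2*sx*E + (-48)*Complex.I^3*cx^2*sx*E^2*F + (-16)*Complex.I^3*st*cx*sx*E + (-48)*Complex.I^3*st*cx*sx*E^2*F + (-16)*Complex.I^3*st^2*sx*E + (-12)*Complex.I^3*st^2*sx*E^2*F + (-48)*Complex.I^3*ct*cx*sx*E + (-144)*Complex.I^3*ct*cx*sx*E^2*F + (-96)*Complex.I^3*ct*st*sx*E + (-72)*Complex.I^3*ct*st*sx*E^2*F + (-144)*Complex.I^3*ct^2*sx*E + (-108)*Complex.I^3*ct^2*sx*E^2*F + (-12)*Complex.I^3*A*st*sx^2*E + (-24)*Complex.I^3*A*st*cx^2*E^2*F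 + (-24)*Complex.I^3*A*st^2*cx*E^2*F + (-6)*Complex.I^3*A*st^3*E^2*F + (-4)*Complex.I^3*A*ct*sx^2*E + (-8)*Complex.I^3*A*ct*cx^2*E^2*F + (-80)*Complex.I^3*A*ct*st*cx*E^2*F + (-38)*Complex.I^3*A*ct*st^2*E^2*F + (-24)*Complex.I^3*A*ct^2*cx*E^2*F + (-66)*Complex.I^3*A*ct^2*st*E^2*F + (-18)*Complex.I^3*A*ct^3*E^2*F + (16)*Complex.I^4*cx*sx^2*E + (16)*Complex.I^4*cx^3*E^2*F + (8)*Complex.I^4*st*sx^2*E + (24)*Complex.I^4*st*cx^2*E^2*F + (12)*Complex.I^4*st^2*cx*E^2*F + (2)*Complex.I^4*st^3*E^2*F + (24)*Complex.I^4*ct*sx^2*E + (72)*Complex.I^4*ct*cx^2*E^2*F + (72)*Complex.I^4*ct*st*cx*E^2*F + (18)*Complex.I^4*ct*st^2*E^2*F + (108)*Complex.I^4*ct^2*cx*E^2*F + (54)*Complex.I^4*ct^2*st*E^2*F + (54)*Complex.I^4*ct^3*E^2*F) * hI + ((32)*st*sx^2*E + (-32)*st*cx^2*E + (40)*st^2*cx*E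 + (-36)*st^2*cx*E^2*F + (-32)*st^3*E + (-18)*st^3*E^2*F + (96)*ct*sx^2*E + (-96)*ct*cx^2*E + (48)*ct*st*cx*E + (-24)*ct*st*cx*E^2*F + (-96)*ct*st^2*E + (-66)*ct*st^2*E^2*F + (40)*ct^2*cx*E + (-4)*ct^2*cx*E^2*F + (32)*ct^2*st*E + (-38)*ct^2*st*E^2*F + (96)*ct^3*E + (-6)*ct^3*E^2*F + (-24)*A*st*cx*sx*E + (-12)*A*st^2*sx*E + (-8)*A*ct*cx*sx*E + (-40)*A*ct*st*sx*E + (-12)*A*ct^2*sx*E + (32)*Complex.I*st*cx*sx*E + (40)*Complex.I*st^2*sx*E + (-36)*Complex.I*st^2*sx*E^2*F + (96)*Complex.I*ct*cx*sx*E + (48)*Complex.I*ct*st*sx*E + (-24)*Complex.I*ct*st*sx*E^2*F + (40)*Complex.I*ct^2*sx*E + (-4)*Complex.I*ct^2*sx*E^2*F + (36)*Complex.I*A*st*sx^2*E + (-36)*Complex.I*A*st*cx^2*E + (12)*Complex.I*A*st^2*cx*E + (-54)*Complex.I*A*st^3*E^2*F + (12)*Complex.I*A*ct*sx^2*E + (-12)*Complex.I*A*ct*cx^2*E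 + (40)*Complex.I*A*ct*st*cx*E + (-54)*Complex.I*A*ct*st^2*E^2*F + (12)*Complex.I*A*ct^2*cx*E + (-18)*Complex.I*A*ct^2*st*E^2*F + (-2)*Complex.I*A*ct^3*E^2*F) * hA + ((120)*cx*E + (-120)*cx*E^2*F + (312)*st*E + (-168)*st*E^2*F + (504)*ct*E + (-72)*ct*E^2*F + (-24)*A*sx*E + (24)*A*sx*E^2*F + (120)*Complex.I*sx*E + (-120)*Complex.I*sx*E^2*F + (24)*Complex.I*A*cx*E + (-24)*Complex.I*A*cx*E^2*F + (264)*Complex.I*A*st*E + (-120)*Complex.I*A*st*E^2*F + (72)*Complex.I*A*ct*E + (-24)*Complex.I*A*ct*E^2*F) * hT + ((16)*cx*E + (-16)*cx*E^2*F + (-120)*st*E + (-24)*st*E^2*F + (-360)*ct*E + (-72)*ct*E^2*F + (48)*Complex.I*sx*E + (-48)*Complex.I*sx*E^2*F + (-120)*Complex.I*A*st*E + (-24)*Complex.I*A*st*E^2*F + (-40)*Complex.I*A*ct*E + (-8)*Complex.I*A*ct*E^2*F) * hX + ((-136)*cx*E + (32)*cx*sx^2*E + (-192)*st*E + (-240)*st^2*cx*E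 + (-224)*st^3*E + (-144)*ct*E + (-144)*ct*st*cx*E + (-288)*ct*st^2*E + (24)*A*sx*E + (48)*A*st*cx*sx*E + (48)*A*st^2*sx*E + (16)*A*ct*cx*sx*E + (80)*A*ct*st*sx*E + (-168)*Complex.I*sx*E + (-32)*Complex.I*sx^3*E + (-48)*Complex.I*st*cx*sx*E + (-240)*Complex.I*st^2*sx*E + (-144)*Complex.I*ct*cx*sx*E + (-144)*Complex.I*ct*st*sx*E + (-24)*Complex.I*A*cx*E + (-144)*Complex.I*A*st*E + (-48)*Complex.I*A*st^2*cx*E + (-288)*Complex.I*A*st^3*E + (-32)*Complex.I*A*ct*E + (-80)*Complex.I*A*ct*st*cx*E + (-224)*Complex.I*A*ct*st^2*E) * hEF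
end

section
/- Let A ∈ ℂ with A ≠ 0 and let k ∈ ℝ with 0 < |k| < 2|A|. Set ν := |k|·√(4|A|² − k²), which is a positive real number. Then there exists c ∈ ℂ with c ≠ 0 such that the function q̃(x,t) := c·exp(i·k·x + ν·t) satisfies, for all x, t ∈ ℝ, i·∂q̃/∂t(x,t) = ∂²q̃/∂x²(x,t) + 2|A|²·q̃(x,t) + 2A²·conj(q̃(−x,t)). In particular the linearized equation admits a solution growing exponentially in time. -/
open Complex

lemma hdx (d b : ℂ) (k x : ℝ) :
    HasDerivAt (fun y : ℝ => d * Complex.exp (Complex.I * (k : ℂ) * (y : ℂ) + b))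
      (d * (Complex.exp (Complex.I * (k : ℂ) * (x : ℂ) + b) * (Complex.I * k))) x := by
  have h1 : HasDerivAt (fun y : ℝ => Complex.I * (k : ℂ) * (y : ℂ) + b) (Complex.I * k) x := by
    simpa using ((Complex.ofRealCLM.hasDerivAt (x := x)).const_mul (Complex.I * (k : ℂ))).add_const b
  exact h1.cexp.const_mul d

lemma hdt (d a : ℂ) (ν t : ℝ) :
    HasDerivAt (fun s : ℝ => d * Complex.exp (a + (ν : ℂ) * (s : ℂ)))
      (d * (Complex.exp (a + (ν : ℂ) * (t : ℂ)) * ν)) t := by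
  have h1 : HasDerivAt (fun s : ℝ => a + (ν : ℂ) * (s : ℂ)) ((ν : ℂ)) t := by
    simpa using ((Complex.ofRealCLM.hasDerivAt (x := t)).const_mul ((ν : ℂ))).const_add a
  exact h1.cexp.const_mul d

lemma exists_conj_eq (w : ℂ) (hw : ‖w‖ = 1) :
    ∃ c : ℂ, c ≠ 0 ∧ starRingEnd ℂ c = w * c := by
  refine ⟨Complex.exp (-((w.arg : ℝ) / 2 : ℝ) * Complex.I), Complex.exp_ne_zero _, ?_⟩
  set r : ℝ := w.arg with hr
  have hwe : w = Complex.exp ((r : ℂ) * Complex.I) := by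
    conv_lhs => rw [← Complex.norm_mul_exp_arg_mul_I w]
    rw [hw, ← hr, Complex.ofReal_one, one_mul]
  rw [← Complex.exp_conj]
  conv_rhs => rw [hwe, ← Complex.exp_add]
  congr 1
  simp only [map_mul, map_neg, map_div₀, Complex.conj_I, Complex.conj_ofReal, map_ofNat]
  push_cast
  ring

theorem stmt13 (A : ℂ) (hA : A ≠ 0) (k : ℝ) (hk0 : 0 < |k|) (hk2 : |k| < 2 * ‖A‖)
    (ν : ℝ) (hν : ν = |k| * Real.sqrt (4 * ‖A‖ ^ 2 - k ^ 2)) :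
    0 < ν ∧
    ∃ c : ℂ, c ≠ 0 ∧
      ∀ x t : ℝ,
        Complex.I * deriv (fun s : ℝ =>
            c * Complex.exp (Complex.I * (k : ℂ) * (x : ℂ) + (ν : ℂ) * (s : ℂ))) t =
          deriv (deriv (fun y : ℝ =>
            c * Complex.exp (Complex.I * (k : ℂ) * (y : ℂ) + (ν : ℂ) * (t : ℂ)))) x
          + 2 * (‖A‖ : ℂ) ^ 2 *
              (c * Complex.exp (Complex.I * (k : ℂ) * (x : ℂ) + (ν : ℂ) * (t : ℂ)))
          + 2 * A ^ 2 * starRingEnd ℂ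
              (c * Complex.exp (Complex.I * (k : ℂ) * ((-x : ℝ) : ℂ) + (ν : ℂ) * (t : ℂ))) := by
  have ha0 : 0 < ‖A‖ := norm_pos_iff.mpr hA
  set a : ℝ := ‖A‖ with ha
  have hksq : k ^ 2 < 4 * a ^ 2 := by
    nlinarith [_root_.sq_abs k, abs_nonneg k,
      mul_pos (by linarith : (0:ℝ) < 2 * a - |k|) (by linarith : (0:ℝ) < 2 * a + |k|)]
  have hpos : (0:ℝ) ≤ 4 * a ^ 2 - k ^ 2 := by linarith
  have hν0 : 0 < ν := by
    rw [hν]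
    exact mul_pos hk0 (Real.sqrt_pos.mpr (by linarith))
  have hνsq : ν ^ 2 = k ^ 2 * (4 * a ^ 2 - k ^ 2) := by
    rw [hν, mul_pow, _root_.sq_abs, Real.sq_sqrt hpos]
  refine ⟨hν0, ?_⟩
  have h2A : (2 * A ^ 2 : ℂ) ≠ 0 := by simp [hA]
  have habsμ : ‖((k ^ 2 - 2 * a ^ 2 : ℝ) : ℂ) + (ν : ℝ) * Complex.I‖ = 2 * a ^ 2 := by
    rw [Complex.norm_add_mul_I]
    have h : (k ^ 2 - 2 * a ^ 2) ^ 2 + ν ^ 2 = (2 * a ^ 2) ^ 2 := by rw [hνsq]; ring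
    rw [h, Real.sqrt_sq (by positivity)]
  have habs2A : ‖(2 * A ^ 2 : ℂ)‖ = 2 * a ^ 2 := by
    rw [norm_mul, norm_pow, ← ha, Complex.norm_two]
  have habsu : ‖(((k ^ 2 - 2 * a ^ 2 : ℝ) : ℂ) + (ν : ℝ) * Complex.I) / (2 * A ^ 2)‖ = 1 := by
    rw [norm_div, habsμ, habs2A, div_self (by positivity)]
  obtain ⟨c, hc0, hconjc⟩ := exists_conj_eq _ habsu
  have hkey : 2 * A ^ 2 * starRingEnd ℂ c =
      (((k ^ 2 - 2 * a ^ 2 : ℝ) : ℂ) + (ν : ℝ) * Complex.I) * c := by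
    rw [hconjc]
    field_simp
  push_cast at hkey
  refine ⟨c, hc0, fun x t => ?_⟩
  rw [(hdt c (Complex.I * (k : ℂ) * (x : ℂ)) ν t).deriv]
  have hd1 : deriv (fun y : ℝ =>
      c * Complex.exp (Complex.I * (k : ℂ) * (y : ℂ) + (ν : ℂ) * (t : ℂ))) =
      fun y : ℝ => (c * (Complex.I * k)) *
        Complex.exp (Complex.I * (k : ℂ) * (y : ℂ) + (ν : ℂ) * (t : ℂ)) := by
    funext y
    rw [(hdx c ((ν : ℂ) * (t : ℂ)) k y).deriv]
    ring
  rw [hd1, (hdx (c * (Complex.I * k)) ((ν : ℂ) * (t : ℂ)) k x).deriv]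
  have hconjexp : starRingEnd ℂ
      (Complex.exp (Complex.I * (k : ℂ) * ((-x : ℝ) : ℂ) + (ν : ℂ) * (t : ℂ)))
      = Complex.exp (Complex.I * (k : ℂ) * (x : ℂ) + (ν : ℂ) * (t : ℂ)) := by
    rw [← Complex.exp_conj]
    congr 1
    simp only [map_add, map_mul, Complex.conj_I, Complex.conj_ofReal, Complex.ofReal_neg, map_neg]
    ring
  rw [map_mul, hconjexp]
  linear_combination -Complex.exp (Complex.I * (k : ℂ) * (x : ℂ) + (ν : ℂ) * (t : ℂ)) * hkey
    - (c * (k : ℂ) ^ 2 * Complex.exp (Complex.I * (k : ℂ) * (x : ℂ) + (ν : ℂ) * (t : ℂ))) * Complex.I_mul_I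
end

section
/- Let σ ∈ ℝ with σ = 1 or σ = −1, let A ∈ ℂ, k ∈ ℝ, and λ ∈ ℂ with λ + conj(λ) ≠ 0, and let q₁, q₂ ∈ ℂ with (q₁, q₂) ≠ (0, 0). Define q̃(x,t) := q₁·exp(i·k·x + i·λ·t) + q₂·exp(i·k·x − i·conj(λ)·t). If q̃ satisfies, for all x, t ∈ ℝ, i·∂q̃/∂t(x,t) = ∂²q̃/∂x²(x,t) − 2σ|A|²·q̃(x,t) − 2σA²·conj(q̃(−x,t)), then λ² = k²·(k² + 4σ|A|²). -/
open Complex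

lemma hdAff (a b : ℂ) (s : ℝ) :
    HasDerivAt (fun u : ℝ => Complex.exp (a + b * u)) (b * Complex.exp (a + b * s)) s := by
  have h1 : HasDerivAt (fun u : ℝ => (u : ℂ)) 1 s := Complex.ofRealCLM.hasDerivAt
  simpa [mul_comm] using ((h1.const_mul b).const_add a).cexp

lemma hdAff' (a b : ℂ) (s : ℝ) :
    HasDerivAt (fun u : ℝ => Complex.exp (b * u + a)) (b * Complex.exp (b * s + a)) s := by
  have h1 : HasDerivAt (fun u : ℝ => (u : ℂ)) 1 s := Complex.ofRealCLM.hasDerivAt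
  simpa [mul_comm] using ((h1.const_mul b).add_const a).cexp

lemma hdSum (q1 q2 b c1 c2 : ℂ) (s : ℝ) :
    HasDerivAt (fun u : ℝ => q1 * Complex.exp (b*u + c1) + q2 * Complex.exp (b*u + c2))
      (b * (q1 * Complex.exp (b*s + c1) + q2 * Complex.exp (b*s + c2))) s := by
  have h := ((hdAff' c1 b s).const_mul q1).fun_add ((hdAff' c2 b s).const_mul q2)
  exact h.congr_deriv (by ring)

lemma hd2 (q1 q2 b c1 c2 : ℂ) (x : ℝ) :
    deriv (deriv (fun y : ℝ => q1 * Complex.exp (b*y + c1) + q2 * Complex.exp (b*y + c2))) x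
      = b*b*(q1 * Complex.exp (b*x + c1) + q2 * Complex.exp (b*x + c2)) := by
  have h : deriv (fun y : ℝ => q1 * Complex.exp (b*y + c1) + q2 * Complex.exp (b*y + c2))
      = fun y : ℝ => b * (q1 * Complex.exp (b*y + c1) + q2 * Complex.exp (b*y + c2)) :=
    funext fun y => (hdSum q1 q2 b c1 c2 y).deriv
  rw [h, ((hdSum q1 q2 b c1 c2 x).const_mul b).deriv]; ring

lemma hdT (q1 q2 a1 a2 b1 b2 : ℂ) (t : ℝ) :
    deriv (fun s : ℝ => q1 * Complex.exp (a1 + b1*s) + q2 * Complex.exp (a2 + b2*s)) t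
      = b1 * q1 * Complex.exp (a1 + b1*t) + b2 * q2 * Complex.exp (a2 + b2*t) := by
  rw [(((hdAff a1 b1 t).const_mul q1).fun_add ((hdAff a2 b2 t).const_mul q2)).deriv]; ring

theorem stmt14 (σ : ℝ) (hσ : σ = 1 ∨ σ = -1) (A : ℂ) (k : ℝ) (lam : ℂ)
    (hlam : lam + starRingEnd ℂ lam ≠ 0) (q1 q2 : ℂ) (hq12 : ¬(q1 = 0 ∧ q2 = 0))
    (qt : ℝ → ℝ → ℂ)
    (hqt : ∀ x t : ℝ, qt x t =
        q1 * Complex.exp (Complex.I * (k : ℂ) * (x : ℂ) + Complex.I * lam * (t : ℂ))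
        + q2 * Complex.exp (Complex.I * (k : ℂ) * (x : ℂ) - Complex.I * starRingEnd ℂ lam * (t : ℂ)))
    (hpde : ∀ x t : ℝ, Complex.I * deriv (fun s : ℝ => qt x s) t =
        deriv (deriv (fun y : ℝ => qt y t)) x
        - 2 * (σ : ℂ) * (‖A‖ : ℂ) ^ 2 * qt x t
        - 2 * (σ : ℂ) * A ^ 2 * starRingEnd ℂ (qt (-x) t)) :
    lam ^ 2 = (k : ℂ) ^ 2 * ((k : ℂ) ^ 2 + 4 * (σ : ℂ) * (‖A‖ : ℂ) ^ 2) := by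
  set L : ℂ := starRingEnd ℂ lam with hL
  set m : ℂ := (‖A‖ : ℂ) ^ 2 with hm
  -- the main coefficient equation at x = 0, for arbitrary t
  have key : ∀ t : ℝ,
      (- lam * q1 + (k:ℂ)^2 * q1 + 2*σ*m*q1 + 2*σ*A^2 * starRingEnd ℂ q2)
        * Complex.exp (Complex.I * lam * t)
      + (L * q2 + (k:ℂ)^2 * q2 + 2*σ*m*q2 + 2*σ*A^2 * starRingEnd ℂ q1)
        * Complex.exp (-(Complex.I * L) * t) = 0 := by
    intro t
    have h := hpde 0 t
    -- time derivative at x = 0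
    have ht : (fun s : ℝ => qt 0 s)
        = fun s : ℝ => q1 * Complex.exp (Complex.I * k * (0:ℝ) + (Complex.I * lam) * s)
          + q2 * Complex.exp (Complex.I * k * (0:ℝ) + (-(Complex.I * L)) * s) := by
      funext s; rw [hqt]; ring_nf
    -- space function at time t
    have hx : (fun y : ℝ => qt y t)
        = fun y : ℝ => q1 * Complex.exp ((Complex.I * k) * y + Complex.I * lam * t)
          + q2 * Complex.exp ((Complex.I * k) * y + (-(Complex.I * L)) * t) := by
      funext y; rw [hqt]; ring_nf
    rw [ht, hx, hdT, hd2, hqt, hqt] at h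
    simp only [neg_zero, Complex.ofReal_zero, mul_zero, zero_add, zero_mul, add_zero,
      map_add, map_mul, Complex.exp_zero] at h ⊢
    rw [← Complex.exp_conj, ← Complex.exp_conj] at h
    simp only [map_add, map_mul, Complex.conj_I, Complex.conj_conj, Complex.conj_ofReal,
      map_sub, map_neg] at h
    have hh : (starRingEnd ℂ) L = lam := by rw [hL, Complex.conj_conj]
    simp only [map_zero, zero_sub, neg_mul, neg_neg, hh] at h ⊢
    linear_combination h + (-(lam*q1*Complex.exp (Complex.I*lam*t)) + (k:ℂ)^2*q1*Complex.exp (Complex.I*lam*t)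
      + (k:ℂ)^2*q2*Complex.exp (-(Complex.I*L*t)) + L*q2*Complex.exp (-(Complex.I*L*t))) * Complex.I_sq
  have hre : lam.re ≠ 0 := by
    intro h'
    apply hlam
    rw [hL, Complex.add_conj, h']
    norm_num
  set t0 : ℝ := Real.pi / (2*lam.re) with ht0def
  have h0 := key 0
  have ht0 := key t0
  set P : ℂ := - lam * q1 + (k:ℂ)^2 * q1 + 2*σ*m*q1 + 2*σ*A^2 * starRingEnd ℂ q2 with hPdef
  set Q : ℂ := L * q2 + (k:ℂ)^2 * q2 + 2*σ*m*q2 + 2*σ*A^2 * starRingEnd ℂ q1 with hQdef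
  simp only [Complex.ofReal_zero, mul_zero, neg_zero, Complex.exp_zero, mul_one] at h0
  -- h0 : P + Q = 0
  have hexp1 : Complex.exp (Complex.I*lam*t0) * Complex.exp (Complex.I*L*t0) = -1 := by
    rw [← Complex.exp_add]
    have harg : Complex.I*lam*(t0:ℂ) + Complex.I*L*(t0:ℂ) = (Real.pi : ℂ) * Complex.I := by
      have h2 : lam + L = ((2*lam.re : ℝ) : ℂ) := by
        rw [hL]; exact Complex.add_conj lam
      have h3 : (2*lam.re) * t0 = Real.pi := by
        rw [ht0def]; field_simp
      calc Complex.I*lam*(t0:ℂ) + Complex.I*L*(t0:ℂ)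
          = ((2*lam.re : ℝ) : ℂ) * (t0:ℂ) * Complex.I := by rw [← h2]; ring
        _ = (((2*lam.re) * t0 : ℝ) : ℂ) * Complex.I := by push_cast; ring
        _ = (Real.pi : ℂ) * Complex.I := by rw [h3]
    rw [harg, Complex.exp_pi_mul_I]
  have hexp2 : Complex.exp (-(Complex.I*L)*t0) * Complex.exp (Complex.I*L*t0) = 1 := by
    rw [← Complex.exp_add, show -(Complex.I*L)*(t0:ℂ) + Complex.I*L*(t0:ℂ) = 0 by ring,
      Complex.exp_zero]
  have hQ0 : Q = 0 := by
    linear_combination h0 / 2 + (Complex.exp (Complex.I*L*(t0:ℂ)) / 2) * ht0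
      - (P/2) * hexp1 - (Q/2) * hexp2
  have hP0 : P = 0 := by linear_combination h0 - hQ0
  -- conjugate of hQ0
  have hQc : lam * starRingEnd ℂ q2 + (k:ℂ)^2 * starRingEnd ℂ q2 + 2*σ*m* starRingEnd ℂ q2
      + 2*σ*(starRingEnd ℂ A)^2 * q1 = 0 := by
    have hcc := congrArg (starRingEnd ℂ) hQ0
    rw [hQdef] at hcc
    simpa [map_add, map_mul, map_pow, map_ofNat, Complex.conj_ofReal, Complex.conj_conj, hm, hL]
      using hcc
  have hAA : A * starRingEnd ℂ A = m := by
    rw [Complex.mul_conj, hm, ← Complex.sq_norm]; push_cast; ring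
  have hσ2 : (σ:ℂ)^2 = 1 := by rcases hσ with h|h <;> rw [h] <;> norm_num
  by_cases hq1 : q1 = 0
  · have hq2 : q2 ≠ 0 := fun h => hq12 ⟨hq1, h⟩
    have hB : starRingEnd ℂ q2 ≠ 0 := by simpa using hq2
    have hσC : (2*(σ:ℂ)) ≠ 0 := by rcases hσ with h|h <;> rw [h] <;> norm_num
    have hA2 : A^2 * starRingEnd ℂ q2 = 0 := by
      have h1 : 2*(σ:ℂ) * (A^2 * starRingEnd ℂ q2) = 0 := by
        rw [hPdef, hq1] at hP0; linear_combination hP0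
      exact (mul_eq_zero.mp h1).resolve_left hσC
    have hA0 : A = 0 := by
      have hz := (mul_eq_zero.mp hA2).resolve_right hB
      exact pow_eq_zero_iff (n := 2) (by norm_num) |>.mp hz
    have hm0 : m = 0 := by rw [hm, hA0]; simp
    have hlam2 : (lam + (k:ℂ)^2) * starRingEnd ℂ q2 = 0 := by
      rw [hq1, hA0, hm0] at hQc; linear_combination hQc
    have hle : lam = -(k:ℂ)^2 := by
      have hz := (mul_eq_zero.mp hlam2).resolve_right hB
      linear_combination hz
    rw [hle, hm0]; ring
  · have hfin : q1 * (lam^2 - ((k:ℂ)^2 + 2*σ*m)^2 + 4*m^2) = 0 := by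
      have hP' : - lam * q1 + (k:ℂ)^2 * q1 + 2*σ*m*q1 + 2*σ*A^2 * starRingEnd ℂ q2 = 0 := by
        rw [hPdef] at hP0; exact hP0
      linear_combination (-(lam + (k:ℂ)^2 + 2*(σ:ℂ)*m)) * hP' + (2*(σ:ℂ)*A^2) * hQc
        + (-(4*q1*(A * starRingEnd ℂ A + m))) * hAA
        + (-(4*q1*(A * starRingEnd ℂ A)^2)) * hσ2
    have h2 := (mul_eq_zero.mp hfin).resolve_left hq1
    linear_combination h2 + 4*m^2*hσ2
end
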